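/- For all i, k ∈ F_q and every g ∈ Y_k, the number of pairs (u,v) ∈ Y_i × Y_{−i} with uv = g equals: q if k ∉ {i, −i}; q − 1 if k ∈ {i, −i} and i ≠ 0; and q − 2 if k = i = 0. -/

import Mathlib

/-- The Heisenberg group `H₃(F)` of upper unitriangular 3×3 matrices over `F`,
recorded by the three free entries: `x` in position (1,2), `y` in position (2,3),
`z` in position (1,3). -/
@[ext]
structure Heis (F : Type*) where
  x : F
  y : F
  z : F
deriving DecidableEq

namespace Heis

variable {F : Type*} [Field F]

/-- Multiplication corresponding to the matrix product. -/
instance : Group (Heis F) where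
  mul a b := ⟨a.x + b.x, a.y + b.y, a.z + b.z + a.x * b.y⟩
  one := ⟨0, 0, 0⟩
  inv a := ⟨-a.x, -a.y, -a.z + a.x * a.y⟩
  mul_assoc a b c := Heis.ext
    (show a.x + b.x + c.x = a.x + (b.x + c.x) by ring)
    (show a.y + b.y + c.y = a.y + (b.y + c.y) by ring)
    (show a.z + b.z + a.x * b.y + c.z + (a.x + b.x) * c.y
        = a.z + (b.z + c.z + b.x * c.y) + a.x * (b.y + c.y) by ring)
  one_mul a := Heis.ext
    (show (0 : F) + a.x = a.x by ring)
    (show (0 : F) + a.y = a.y by ring)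
    (show (0 : F) + a.z + 0 * a.y = a.z by ring)
  mul_one a := Heis.ext
    (show a.x + 0 = a.x by ring)
    (show a.y + 0 = a.y by ring)
    (show a.z + 0 + a.x * 0 = a.z by ring)
  inv_mul_cancel a := Heis.ext
    (show -a.x + a.x = 0 by ring)
    (show -a.y + a.y = 0 by ring)
    (show -a.z + a.x * a.y + a.z + -a.x * a.y = 0 by ring)

instance [Fintype F] : Fintype (Heis F) :=
  Fintype.ofEquiv (F × F × F)
    ⟨fun p => ⟨p.1, p.2.1, p.2.2⟩, fun a => (a.x, a.y, a.z), fun _ => rfl, fun _ => rfl⟩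

end Heis

/-- The element `g(x,y,z)` of the Heisenberg group. -/
def gElt {F : Type*} (x y z : F) : Heis F := ⟨x, y, z⟩

/-- The center `Z = {g(0,0,z) : z ∈ F}` of the Heisenberg group, as a set. -/
def Zset (F : Type*) [Field F] : Set (Heis F) := {g : Heis F | g.x = 0 ∧ g.y = 0}

/-- The center `Z` as a subgroup of the Heisenberg group. -/
def Zsub (F : Type*) [Field F] : Subgroup (Heis F) where
  carrier := Zset F
  mul_mem' := fun {a b} ha hb =>
    ⟨show a.x + b.x = 0 by rw [ha.1, hb.1, add_zero],
     show a.y + b.y = 0 by rw [ha.2, hb.2, add_zero]⟩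
  one_mem' := ⟨rfl, rfl⟩
  inv_mem' := fun {a} ha =>
    ⟨show -a.x = 0 by rw [ha.1, neg_zero],
     show -a.y = 0 by rw [ha.2, neg_zero]⟩

/-- `γ_i(α,β) = αβ/2 + (α² − εβ²)i`. -/
def gam {F : Type*} [Field F] (ε i α β : F) : F := α * β / 2 + (α ^ 2 - ε * β ^ 2) * i

/-- `Y_i = {g(α, β, γ_i(α,β)) : (α,β) ≠ (0,0)}`. -/
def Yset {F : Type*} [Field F] (ε i : F) : Set (Heis F) :=
  {g : Heis F | ∃ α β : F, (α, β) ≠ (0, 0) ∧ g = gElt α β (gam ε i α β)}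

/-- `X_i = Y_i ∪ {e}`. -/
def Xset {F : Type*} [Field F] (ε i : F) : Set (Heis F) := Yset ε i ∪ {1}

/-- The map `ρ(M) : G → G` attached to the matrix `M = [[α,β],[εβ,α]]`. -/
def rho {F : Type*} [Field F] (ε α β : F) : Heis F → Heis F := fun g =>
  gElt (α * g.x + ε * β * g.y) (β * g.x + α * g.y)
    (α * β * (g.x ^ 2 / 2 + ε * g.y ^ 2 / 2) + ε * β ^ 2 * g.x * g.y
      + (α ^ 2 - ε * β ^ 2) * g.z)

/-- `K = {ρ(M) : M = [[α,β],[εβ,α]], (α,β) ≠ (0,0)}`, as a set of maps `G → G`. -/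
def Kset {F : Type*} [Field F] (ε : F) : Set (Heis F → Heis F) :=
  {f | ∃ α β : F, (α, β) ≠ (0, 0) ∧ f = rho ε α β}

/-- The family of sets `{e}`, `Z \ {e}`, `Y_i` for `i ∈ F`. -/
def SFam {F : Type*} [Field F] (ε : F) : Set (Set (Heis F)) :=
  insert {1} (insert (Zset F \ {1}) {S | ∃ i : F, S = Yset ε i})

/-- `f` preserves each of the basic sets `{e}`, `Z \ {e}`, `Y_i`:
`hg⁻¹ ∈ S ↔ f(h)f(g)⁻¹ ∈ S`. -/
def Preserves {F : Type*} [Field F] (ε : F) (f : Heis F → Heis F) : Prop :=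
  ∀ S ∈ SFam ε, ∀ g h : Heis F, h * g⁻¹ ∈ S ↔ f h * (f g)⁻¹ ∈ S

/-- The set of permutations of `G` of the form `x ↦ σ(x)·c` with `σ ∈ K`, `c ∈ G`. -/
def Aset {F : Type*} [Field F] (ε : F) : Set (Equiv.Perm (Heis F)) :=
  {f | ∃ σ ∈ Kset ε, ∃ c : Heis F, ∀ x : Heis F, f x = σ x * c}

/-- The operation `ψ` on `F ∪ {∞}`, with `∞` encoded as `none`. -/
def psi {F : Type*} [Field F] [DecidableEq F] (ε : F) : Option F → Option F → Option F
  | none, j => j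
  | some i, none => some i
  | some i, some j => if i + j = 0 then none else some ((i * j + ε / 16) / (i + j))

/-- `Y_k` for `k ∈ F ∪ {∞}`, where `Y_∞ = Z \ {e}`. -/
def YInf {F : Type*} [Field F] (ε : F) : Option F → Set (Heis F)
  | some i => Yset ε i
  | none => Zset F \ {1}


section Aux

variable {F : Type*} [Field F]

lemma Heis.mul_def' (a b : Heis F) :
    a * b = ⟨a.x + b.x, a.y + b.y, a.z + b.z + a.x * b.y⟩ := rfl

lemma mem_Yset_iff (ε i : F) (g : Heis F) :
    g ∈ Yset ε i ↔ (g.x, g.y) ≠ (0, 0) ∧ g.z = gam ε i g.x g.y := by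
  constructor
  · rintro ⟨a, b, hab, rfl⟩; exact ⟨hab, rfl⟩
  · rintro ⟨h1, h2⟩; exact ⟨g.x, g.y, h1, by cases g; simp_all [gElt]⟩

lemma key_eq (h2 : (2 : F) ≠ 0) (ε i k α β a b : F) :
    gam ε i a b + gam ε (-i) (α - a) (β - b) + a * (β - b) = gam ε k α β ↔
      (β + 4 * i * α) * a + (-(α + 4 * i * ε * β)) * b
        = (α ^ 2 - ε * β ^ 2) * (2 * (k + i)) := by
  unfold gam
  constructor <;> intro h
  · field_simp at h
    linear_combination h
  · field_simp
    linear_combination h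

lemma card_line [Fintype F] [DecidableEq F] (A B c : F) (h : ¬(A = 0 ∧ B = 0)) :
    (Finset.univ.filter (fun p : F × F => A * p.1 + B * p.2 = c)).card
      = Fintype.card F := by
  rw [← Fintype.card_subtype]
  by_cases hA : A = 0
  · have hB : B ≠ 0 := fun hB => h ⟨hA, hB⟩
    refine Fintype.card_congr
      ⟨fun p => p.1.1, fun t => ⟨(t, (c - A * t) / B), by field_simp; ring⟩, ?_, fun t => rfl⟩
    rintro ⟨⟨a, b⟩, hp⟩
    refine Subtype.ext (Prod.ext rfl ?_)
    field_simp
    linear_combination -hp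
  · refine Fintype.card_congr
      ⟨fun p => p.1.2, fun t => ⟨((c - B * t) / A, t), by field_simp; ring⟩, ?_, fun t => rfl⟩
    rintro ⟨⟨a, b⟩, hp⟩
    refine Subtype.ext (Prod.ext ?_ rfl)
    field_simp
    linear_combination -hp

end Aux

/-- For all `i, k ∈ F_q` and every `g ∈ Y_k`, the number of pairs
`(u,v) ∈ Y_i × Y_{−i}` with `uv = g` equals `q` if `k ∉ {i, −i}`, equals `q − 1` if
`k ∈ {i, −i}` and `i ≠ 0`, and equals `q − 2` if `k = i = 0`. -/
theorem statement_6 {F : Type*} [Field F] [Fintype F]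
    (hodd : Odd (Fintype.card F)) (ε : F) (hε : ¬IsSquare ε)
    (i k : F) (g : Heis F) (hg : g ∈ Yset ε k) :
    (k ≠ i ∧ k ≠ -i →
      Nat.card {p : Heis F × Heis F // p.1 ∈ Yset ε i ∧ p.2 ∈ Yset ε (-i) ∧ p.1 * p.2 = g}
        = Fintype.card F) ∧
    ((k = i ∨ k = -i) → i ≠ 0 →
      Nat.card {p : Heis F × Heis F // p.1 ∈ Yset ε i ∧ p.2 ∈ Yset ε (-i) ∧ p.1 * p.2 = g}
        = Fintype.card F - 1) ∧
    (k = 0 → i = 0 →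
      Nat.card {p : Heis F × Heis F // p.1 ∈ Yset ε i ∧ p.2 ∈ Yset ε (-i) ∧ p.1 * p.2 = g}
        = Fintype.card F - 2) := by
  classical
  have h2 : (2 : F) ≠ 0 := by
    refine Ring.two_ne_zero fun hc => ?_
    have h1 : Fintype.card F % 2 = 0 := FiniteField.even_card_iff_char_two.mp hc
    have h2 := hodd
    rw [Nat.odd_iff] at h2
    omega
  obtain ⟨α, β, hne, rfl⟩ := hg
  have hQ : α ^ 2 - ε * β ^ 2 ≠ 0 := by
    intro h
    by_cases hβ : β = 0
    · have hα2 : α ^ 2 = 0 := by rw [hβ] at h; linear_combination h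
      have hα : α = 0 := by
        exact pow_eq_zero_iff (n := 2) (by norm_num) |>.mp hα2
      exact hne (by rw [hα, hβ])
    · refine hε ⟨α / β, ?_⟩
      field_simp
      linear_combination -h
  set A : F := β + 4 * i * α with hA
  set B : F := -(α + 4 * i * ε * β) with hB
  set c₀ : F := (α ^ 2 - ε * β ^ 2) * (2 * (k + i)) with hc₀
  have hAB : ¬(A = 0 ∧ B = 0) := by
    rintro ⟨ha, hb⟩
    rw [hA] at ha
    rw [hB] at hb
    have hb' : α + 4 * i * ε * β = 0 := by linear_combination -hb
    by_cases hα : α = 0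
    · have hβ0 : β = 0 := by rw [hα] at ha; linear_combination ha
      exact hne (by rw [hα, hβ0])
    · have hmul : (16 * i ^ 2 * ε) * α = 1 * α := by
        linear_combination (-1 : F) * hb' + 4 * i * ε * ha
      have hcancel : 16 * i ^ 2 * ε = 1 := mul_right_cancel₀ hα hmul
      have hi : i ≠ 0 := by
        intro hi0
        rw [hi0] at hcancel
        norm_num at hcancel
      have h4 : (4 : F) ≠ 0 := by
        have : (4 : F) = 2 * 2 := by norm_num
        rw [this]
        exact mul_ne_zero h2 h2
      have h4i : (4 * i) ≠ 0 := mul_ne_zero h4 hi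
      refine hε ⟨1 / (4 * i), ?_⟩
      rw [div_mul_div_comm, one_mul, eq_div_iff (mul_ne_zero h4i h4i)]
      linear_combination hcancel
  set P : F × F → Prop := fun p =>
    A * p.1 + B * p.2 = c₀ ∧ p ≠ (0, 0) ∧ p ≠ (α, β) with hP
  have hequiv : Nat.card {p : Heis F × Heis F //
      p.1 ∈ Yset ε i ∧ p.2 ∈ Yset ε (-i) ∧ p.1 * p.2 = gElt α β (gam ε k α β)}
      = Nat.card {p : F × F // P p} := by
    refine Nat.card_congr ⟨fun p => ⟨(p.1.1.x, p.1.1.y), ?_⟩,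
      fun q => ⟨(gElt q.1.1 q.1.2 (gam ε i q.1.1 q.1.2),
        gElt (α - q.1.1) (β - q.1.2) (gam ε (-i) (α - q.1.1) (β - q.1.2))), ?_⟩, ?_, ?_⟩
    · obtain ⟨⟨u, v⟩, hu, hv, huv⟩ := p
      rw [mem_Yset_iff] at hu hv
      obtain ⟨hu1, hu2⟩ := hu
      obtain ⟨hv1, hv2⟩ := hv
      rw [Heis.mul_def'] at huv
      dsimp only at hu1 hu2 hv1 hv2 huv
      have hx : u.x + v.x = α := congrArg Heis.x huv
      have hy : u.y + v.y = β := congrArg Heis.y huv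
      have hz : u.z + v.z + u.x * v.y = gam ε k α β := congrArg Heis.z huv
      have hvx : v.x = α - u.x := by linear_combination hx
      have hvy : v.y = β - u.y := by linear_combination hy
      refine ⟨?_, hu1, ?_⟩
      · rw [← key_eq h2 ε i k α β u.x u.y]
        rw [hvx, hvy] at hv2
        rw [hu2, hv2, hvy] at hz
        linear_combination hz
      · intro hcon
        have hc1 : u.x = α := congrArg Prod.fst hcon
        have hc2 : u.y = β := congrArg Prod.snd hcon
        apply hv1
        rw [hvx, hvy, hc1, hc2]
        simp
    · obtain ⟨⟨a, b⟩, hline, hne0, hneαβ⟩ := q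
      simp only
      refine ⟨(mem_Yset_iff ε i _).mpr ⟨hne0, rfl⟩,
        (mem_Yset_iff ε (-i) _).mpr ⟨?_, rfl⟩, ?_⟩
      · intro hcon
        apply hneαβ
        have hc1 : α - a = 0 := congrArg Prod.fst hcon
        have hc2 : β - b = 0 := congrArg Prod.snd hcon
        have ha' : a = α := by linear_combination -hc1
        have hb' : b = β := by linear_combination -hc2
        rw [ha', hb']
      · rw [Heis.mul_def']
        refine Heis.ext (show a + (α - a) = α by ring) (show b + (β - b) = β by ring) ?_
        show gam ε i a b + gam ε (-i) (α - a) (β - b) + a * (β - b) = gam ε k α β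
        exact (key_eq h2 ε i k α β a b).mpr hline
    · rintro ⟨⟨u, v⟩, hu, hv, huv⟩
      rw [mem_Yset_iff] at hu hv
      rw [Heis.mul_def'] at huv
      dsimp only at hu hv huv
      have hx : u.x + v.x = α := congrArg Heis.x huv
      have hy : u.y + v.y = β := congrArg Heis.y huv
      have hvx : v.x = α - u.x := by linear_combination hx
      have hvy : v.y = β - u.y := by linear_combination hy
      refine Subtype.ext (Prod.ext ?_ ?_)
      · exact Heis.ext rfl rfl hu.2.symm
      · refine Heis.ext (show α - u.x = v.x by linear_combination -hx)
          (show β - u.y = v.y by linear_combination -hy) ?_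
        show gam ε (-i) (α - u.x) (β - u.y) = v.z
        rw [hv.2, hvx, hvy]
    · rintro ⟨⟨a, b⟩, hq⟩
      rfl
  rw [hequiv]
  have hfin : Nat.card {p : F × F // P p}
      = ((Finset.univ.filter (fun p : F × F => A * p.1 + B * p.2 = c₀))
          \ {((0 : F), (0 : F)), (α, β)}).card := by
    rw [Nat.card_eq_fintype_card, Fintype.card_subtype]
    congr 1
    ext p
    simp only [Finset.mem_filter, Finset.mem_sdiff, Finset.mem_insert, Finset.mem_singleton,
      Finset.mem_univ, true_and, hP]
    tauto
  rw [hfin]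
  set L : Finset (F × F) :=
    Finset.univ.filter (fun p : F × F => A * p.1 + B * p.2 = c₀) with hL
  have hLcard : L.card = Fintype.card F := card_line A B c₀ hAB
  have hmem0 : ((0 : F), (0 : F)) ∈ L ↔ k = -i := by
    simp only [hL, Finset.mem_filter, Finset.mem_univ, true_and, mul_zero, add_zero, hc₀]
    constructor
    · intro h
      rcases mul_eq_zero.mp h.symm with h' | h'
      · exact absurd h' hQ
      · have h'' : 2 * (k + i) = 0 := h'
        rcases mul_eq_zero.mp h'' with h3 | h3
        · exact absurd h3 h2
        · linear_combination h3
    · intro h; rw [h]; ring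
  have hmemαβ : ((α : F), β) ∈ L ↔ k = i := by
    simp only [hL, Finset.mem_filter, Finset.mem_univ, true_and, hc₀]
    have hval : A * α + B * β = (α ^ 2 - ε * β ^ 2) * (4 * i) := by
      rw [hA, hB]; ring
    rw [hval]
    constructor
    · intro h
      have h' := mul_left_cancel₀ hQ h
      have h'' : 2 * k = 2 * i := by linear_combination -h'
      exact mul_left_cancel₀ h2 h''
    · intro h; rw [h]; ring
  have hsd : L \ {((0 : F), (0 : F)), (α, β)}
      = (L.erase ((0 : F), (0 : F))).erase (α, β) := by
    ext p
    simp only [Finset.mem_sdiff, Finset.mem_insert, Finset.mem_singleton, Finset.mem_erase]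
    tauto
  rw [hsd]
  refine ⟨?_, ?_, ?_⟩
  · rintro ⟨hki, hkni⟩
    rw [Finset.erase_eq_of_notMem, Finset.erase_eq_of_notMem, hLcard]
    · exact fun h => hkni (hmem0.mp h)
    · exact fun h => hki (hmemαβ.mp (Finset.mem_of_mem_erase h))
  · rintro (hk | hk) hi
    · have h0 : ((0 : F), (0 : F)) ∉ L := by
        intro h
        have h' := hmem0.mp h
        rw [hk] at h'
        apply hi
        have : 2 * i = 0 := by linear_combination h'
        rcases mul_eq_zero.mp this with h3 | h3
        · exact absurd h3 h2
        · exact h3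
      rw [Finset.erase_eq_of_notMem h0,
        Finset.card_erase_of_mem (hmemαβ.mpr hk), hLcard]
    · have hαβ : ((α : F), β) ∉ L := by
        intro h
        have h' := hmemαβ.mp h
        rw [hk] at h'
        apply hi
        have : 2 * i = 0 := by linear_combination -h'
        rcases mul_eq_zero.mp this with h3 | h3
        · exact absurd h3 h2
        · exact h3
      rw [Finset.erase_eq_of_notMem (fun h => hαβ (Finset.mem_of_mem_erase h)),
        Finset.card_erase_of_mem (hmem0.mpr hk), hLcard]
  · intro hk hi
    subst hk
    subst hi
    rw [Finset.card_erase_of_mem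
        (Finset.mem_erase.mpr ⟨hne, hmemαβ.mpr rfl⟩),
      Finset.card_erase_of_mem (hmem0.mpr (by rw [neg_zero])), hLcard]
    omega
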